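/- Let E: ℍ → V_n ⊗ ℂ be real analytic, where V_n = ⊕_{i+j=n} ℂX^iY^j, invariant under the translation T: z ↦ z+1 acting on V_n by (X,Y) ↦ (X+Y, Y), and satisfying ∂E/∂z = 0 and ∂E/∂z̄ = c·(X - z̄Y)^n for some c ∈ ℂ. Then c = 0 and E = (α/(πi)^n)·Y^n for some constant α ∈ ℂ. -/

import Mathlib

open MvPolynomial

lemma clm_zero (L : ℂ →L[ℝ] ℂ) (h1 : L 1 = 0) (hI : L Complex.I = 0) : L = 0 := by
  ext z
  have hz : z = z.re • (1:ℂ) + z.im • Complex.I := by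
    simp [Complex.real_smul, Complex.re_add_im]
  rw [hz, map_add, map_smul, map_smul, h1, hI]
  simp

lemma const_on_upper {f : ℂ → ℂ} (hdiff : ∀ z : ℂ, 0 < z.im → DifferentiableAt ℝ f z)
    (hd : ∀ z : ℂ, 0 < z.im → fderiv ℝ f z = 0) :
    ∀ z w : ℂ, 0 < z.im → 0 < w.im → f z = f w := by
  intro z w hz hw
  have hconv : Convex ℝ {u : ℂ | 0 < u.im} := convex_halfSpace_im_gt 0
  have hopen : IsOpen {u : ℂ | 0 < u.im} := isOpen_lt continuous_const Complex.continuous_im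
  exact hconv.is_const_of_fderivWithin_eq_zero
    (fun x hx => (hdiff x hx).differentiableWithinAt)
    (fun x hx => by rw [fderivWithin_of_isOpen hopen hx]; exact hd x hx) hz hw

lemma auxK (Q : MvPolynomial (Fin 2) ℂ) (k : ℕ) :
    (MvPolynomial.aeval ![(Polynomial.X : Polynomial ℂ), 0] Q).coeff k
      = MvPolynomial.coeff (Finsupp.single 0 k) Q := by
  induction Q using MvPolynomial.induction_on' with
  | add p q hp hq => simp [map_add, Polynomial.coeff_add, hp, hq, MvPolynomial.coeff_add]
  | monomial m a =>
      rw [aeval_monomial, MvPolynomial.coeff_monomial]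
      rw [Finsupp.prod_fintype _ _ (fun i => pow_zero _), Fin.prod_univ_two]
      simp only [Matrix.cons_val_zero, Matrix.cons_val_one, Matrix.head_cons]
      by_cases h1 : m 1 = 0
      · have hm : m = Finsupp.single 0 (m 0) := by
          ext i
          fin_cases i
          · simp
          · simpa using h1
        rw [h1, pow_zero, mul_one, Polynomial.algebraMap_eq,
          Polynomial.coeff_C_mul, Polynomial.coeff_X_pow]
        by_cases hk : k = m 0
        · subst hk
          rw [if_pos rfl, mul_one, if_pos hm]
        · rw [if_neg hk, mul_zero, if_neg]
          intro hc
          exact hk (by rw [hc]; simp)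
      · rw [zero_pow h1, mul_zero, mul_zero, Polynomial.coeff_zero]
        rw [if_neg]
        intro hc
        apply h1
        rw [hc]
        simp

lemma sigma_coeff (Q : MvPolynomial (Fin 2) ℂ) (k : ℕ) :
    MvPolynomial.coeff (Finsupp.single 0 k)
      (MvPolynomial.bind₁ ![(X 0 : MvPolynomial (Fin 2) ℂ) + X 1, X 1] Q)
      = MvPolynomial.coeff (Finsupp.single 0 k) Q := by
  rw [← auxK, ← auxK, aeval_bind₁]
  have h : (fun i => MvPolynomial.aeval ![(Polynomial.X : Polynomial ℂ), 0]
      (![(X 0 : MvPolynomial (Fin 2) ℂ) + X 1, X 1] i)) = ![Polynomial.X, 0] := by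
    funext i; fin_cases i <;> simp
  rw [h]

lemma coeff_pow_one (w : ℂ) (n : ℕ) :
    MvPolynomial.coeff (Finsupp.single 0 n) ((X 0 - C w * X 1 : MvPolynomial (Fin 2) ℂ) ^ n) = 1 := by
  rw [← auxK, map_pow, map_sub, map_mul, aeval_X, aeval_X, aeval_C]
  simp [Polynomial.coeff_X_pow]

lemma deg_two (d : Fin 2 →₀ ℕ) : d.degree = d 0 + d 1 := by
  rw [Finsupp.degree_apply, Finset.sum_subset (Finset.subset_univ _)
    (fun i _ hi => Finsupp.notMem_support_iff.mp hi)]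
  exact Fin.sum_univ_two d

lemma homog_deg {n : ℕ} {P : MvPolynomial (Fin 2) ℂ} (hP : P.IsHomogeneous n)
    {b : Fin 2 →₀ ℕ} (hb : MvPolynomial.coeff b P ≠ 0) : b 0 + b 1 = n := by
  have : Finsupp.weight (fun _ => 1) b = n := hP hb
  rwa [← Finsupp.degree_eq_weight_one, deg_two] at this

lemma auxK2 {n : ℕ} {P : MvPolynomial (Fin 2) ℂ} (hP : P.IsHomogeneous n)
    (d : Fin 2 →₀ ℕ) (hd : d 0 + d 1 = n) :
    MvPolynomial.coeff d P
      = (MvPolynomial.aeval ![(Polynomial.X : Polynomial ℂ), 1] P).coeff (d 0) := by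
  conv_rhs => rw [P.as_sum]
  rw [map_sum, Polynomial.finset_sum_coeff, Finset.sum_eq_single d ?h0 ?h1]
  · rw [aeval_monomial, Finsupp.prod_fintype _ _ (fun i => pow_zero _), Fin.prod_univ_two]
    simp [Polynomial.coeff_C_mul, Polynomial.coeff_X_pow]
  case h0 =>
    intro b hb hbd
    rw [aeval_monomial, Finsupp.prod_fintype _ _ (fun i => pow_zero _), Fin.prod_univ_two]
    simp only [Matrix.cons_val_zero, Matrix.cons_val_one, Matrix.head_cons, one_pow, mul_one,
      Polynomial.algebraMap_eq, Polynomial.coeff_C_mul, Polynomial.coeff_X_pow]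
    by_cases hdb : d 0 = b 0
    · exfalso
      apply hbd
      have hbn : b 0 + b 1 = n := homog_deg hP (MvPolynomial.mem_support_iff.mp hb)
      ext i
      fin_cases i
      · simpa using hdb.symm
      · show b 1 = d 1
        omega
    · rw [if_neg hdb, mul_zero]
  case h1 =>
    intro hd'
    simp [MvPolynomial.notMem_support_iff.mp hd']

/-- Let E : ℍ → V_n ⊗ ℂ be real analytic (V_n = homogeneous polynomials of degree n in X, Y,
realized as homogeneous MvPolynomials in variables X 0, X 1), invariant under
T : z ↦ z + 1 acting on V_n by (X,Y) ↦ (X+Y,Y), and satisfying ∂E/∂z = 0 and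
∂E/∂z̄ = c·(X - z̄Y)^n coefficientwise (Wirtinger derivatives ∂/∂z = ½(∂_x - i∂_y),
∂/∂z̄ = ½(∂_x + i∂_y)).  Then c = 0 and E = (α/(πi)^n)·Y^n for some α ∈ ℂ. -/
theorem stmt13 (n : ℕ) (E : ℂ → MvPolynomial (Fin 2) ℂ) (c : ℂ)
    (hhom : ∀ z : ℂ, 0 < z.im → (E z).IsHomogeneous n)
    (hanal : ∀ d : Fin 2 →₀ ℕ, ∀ z : ℂ, 0 < z.im →
      AnalyticAt ℝ (fun w => MvPolynomial.coeff d (E w)) z)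
    (hT : ∀ z : ℂ, 0 < z.im →
      MvPolynomial.bind₁ ![(X 0 : MvPolynomial (Fin 2) ℂ) + X 1, X 1] (E (z + 1)) = E z)
    (hdz : ∀ d : Fin 2 →₀ ℕ, ∀ z : ℂ, 0 < z.im →
      (1 / 2 : ℂ) * (fderiv ℝ (fun w => MvPolynomial.coeff d (E w)) z 1
          - Complex.I * fderiv ℝ (fun w => MvPolynomial.coeff d (E w)) z Complex.I) = 0)
    (hdzbar : ∀ d : Fin 2 →₀ ℕ, ∀ z : ℂ, 0 < z.im →
      (1 / 2 : ℂ) * (fderiv ℝ (fun w => MvPolynomial.coeff d (E w)) z 1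
          + Complex.I * fderiv ℝ (fun w => MvPolynomial.coeff d (E w)) z Complex.I)
        = c * MvPolynomial.coeff d ((X 0 - C (starRingEnd ℂ z) * X 1) ^ n)) :
    c = 0 ∧ ∃ α : ℂ, ∀ z : ℂ, 0 < z.im →
      E z = C (α / (Real.pi * Complex.I) ^ n) * (X 1) ^ n := by
  have hI1 : (0:ℝ) < (Complex.I + 1).im := by
    simp [Complex.add_im]
  have hI : (0:ℝ) < Complex.I.im := by simp
  -- Wirtinger combination
  have hAB : ∀ d : Fin 2 →₀ ℕ, ∀ z : ℂ, 0 < z.im →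
      fderiv ℝ (fun w => MvPolynomial.coeff d (E w)) z 1
        = c * MvPolynomial.coeff d ((X 0 - C (starRingEnd ℂ z) * X 1) ^ n)
      ∧ Complex.I * fderiv ℝ (fun w => MvPolynomial.coeff d (E w)) z Complex.I
        = c * MvPolynomial.coeff d ((X 0 - C (starRingEnd ℂ z) * X 1) ^ n) := by
    intro d z hz
    have h1 := hdz d z hz
    have h2 := hdzbar d z hz
    constructor
    · linear_combination h1 + h2
    · linear_combination h2 - h1
  -- periodicity of top coefficient
  have hper : ∀ z : ℂ, 0 < z.im →
      MvPolynomial.coeff (Finsupp.single 0 n) (E (z+1))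
        = MvPolynomial.coeff (Finsupp.single 0 n) (E z) := by
    intro z hz
    rw [← hT z hz, sigma_coeff]
  -- Step A : c = 0
  have hc : c = 0 := by
    set e : ℂ → ℂ := fun w => MvPolynomial.coeff (Finsupp.single 0 n) (E w) with he
    set M : ℂ →L[ℝ] ℂ := c • (Complex.conjCLE.toContinuousLinearMap) with hM
    have hMapp : ∀ x, M x = c * (starRingEnd ℂ) x := by
      intro x
      simp [hM, smul_eq_mul]
    have hg : ∀ z : ℂ, 0 < z.im → fderiv ℝ (fun w => e w - M w) z = 0 := by
      intro z hz
      have hde : DifferentiableAt ℝ e z := (hanal _ z hz).differentiableAt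
      rw [fderiv_fun_sub hde M.differentiableAt, M.fderiv]
      have hA := (hAB (Finsupp.single 0 n) z hz).1
      have hB := (hAB (Finsupp.single 0 n) z hz).2
      rw [coeff_pow_one] at hA hB
      apply clm_zero
      · rw [ContinuousLinearMap.sub_apply, hMapp]
        simp only [map_one, mul_one]
        rw [sub_eq_zero]
        exact hA.trans (mul_one c)
      · rw [ContinuousLinearMap.sub_apply, hMapp, Complex.conj_I]
        have hBv : fderiv ℝ e z Complex.I = -(Complex.I * c) :=
          mul_left_cancel₀ Complex.I_ne_zero
            (by rw [hB]; simp [← mul_assoc, Complex.I_mul_I])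
        rw [hBv]
        ring
    have hcon := const_on_upper
      (fun z hz => ((hanal _ z hz).differentiableAt).sub M.differentiableAt)
      hg (Complex.I + 1) Complex.I hI1 hI
    have hperI := hper Complex.I hI
    simp only [Pi.sub_apply] at hcon
    rw [hMapp, hMapp, map_add, Complex.conj_I, map_one] at hcon
    have heI : e (Complex.I + 1) = e Complex.I := hperI
    linear_combination heI - hcon
  subst hc
  refine ⟨rfl, ?_⟩
  -- Step B : E is constant on the upper half plane
  have hconst : ∀ z : ℂ, 0 < z.im → E z = E Complex.I := by
    intro z hz
    apply MvPolynomial.ext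
    intro d
    apply const_on_upper (f := fun w => MvPolynomial.coeff d (E w))
      (fun w hw => (hanal d w hw).differentiableAt) ?_ z Complex.I hz hI
    intro w hw
    have hA := (hAB d w hw).1
    have hB := (hAB d w hw).2
    rw [zero_mul] at hA hB
    apply clm_zero _ hA
    exact mul_left_cancel₀ Complex.I_ne_zero (by rw [hB, mul_zero])
  -- Step C : structure of the constant polynomial
  set P : MvPolynomial (Fin 2) ℂ := E Complex.I with hP
  have hPhom : P.IsHomogeneous n := hhom Complex.I hI
  have hsig : MvPolynomial.bind₁ ![(X 0 : MvPolynomial (Fin 2) ℂ) + X 1, X 1] P = P := by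
    have := hT Complex.I hI
    rwa [hconst (Complex.I + 1) hI1] at this
  set q : Polynomial ℂ := MvPolynomial.aeval ![(Polynomial.X : Polynomial ℂ), 1] P with hq
  have hqeval : ∀ t : ℂ, q.eval t = MvPolynomial.aeval ![t, (1:ℂ)] P := by
    intro t
    have hcomp : (Polynomial.aeval t).comp
        (MvPolynomial.aeval ![(Polynomial.X : Polynomial ℂ), 1])
        = MvPolynomial.aeval (R := ℂ) ![t, (1:ℂ)] := by
      apply MvPolynomial.algHom_ext
      intro i
      fin_cases i <;> simp
    rw [← Polynomial.coe_aeval_eq_eval]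
    exact (DFunLike.congr_fun hcomp P :)
  have hqper : ∀ t : ℂ, q.eval (t + 1) = q.eval t := by
    intro t
    rw [hqeval, hqeval]
    conv_rhs => rw [← hsig, aeval_bind₁]
    have harg : (fun i => MvPolynomial.aeval ![t, (1:ℂ)]
        (![(X 0 : MvPolynomial (Fin 2) ℂ) + X 1, X 1] i)) = ![t + 1, (1:ℂ)] := by
      funext i
      fin_cases i <;> simp
    rw [harg]
  have hqnat : ∀ k : ℕ, q.eval (k : ℂ) = q.eval 0 := by
    intro k
    induction k with
    | zero => simp
    | succ m ih => push_cast; rw [hqper]; exact ih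
  have hqC : q = Polynomial.C (q.eval 0) := by
    have hz : q - Polynomial.C (q.eval 0) = 0 := by
      apply Polynomial.eq_zero_of_infinite_isRoot
      apply Set.Infinite.mono (s := Set.range ((↑) : ℕ → ℂ))
      · rintro x ⟨k, rfl⟩
        simp [Polynomial.IsRoot, hqnat k]
      · exact Set.infinite_range_of_injective Nat.cast_injective
    exact sub_eq_zero.mp hz
  set c' : ℂ := q.eval 0 with hc'
  have hPX : P = MvPolynomial.C c' * (X 1 : MvPolynomial (Fin 2) ℂ) ^ n := by
    apply MvPolynomial.ext
    intro d
    rw [MvPolynomial.coeff_C_mul, MvPolynomial.coeff_X_pow]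
    by_cases hdn : d 0 + d 1 = n
    · rw [auxK2 hPhom d hdn, ← hq, hqC, Polynomial.coeff_C]
      by_cases h0 : d 0 = 0
      · have hds : Finsupp.single 1 n = d := by
          ext i
          fin_cases i <;> simp [Finsupp.single_apply] <;> omega
        rw [if_pos h0, if_pos hds, mul_one]
      · rw [if_neg h0, if_neg, mul_zero]
        intro hds
        apply h0
        have := DFunLike.congr_fun hds 0
        simpa using this.symm
    · rw [hPhom.coeff_eq_zero (by rw [deg_two]; exact hdn), if_neg, mul_zero]
      intro hds
      apply hdn
      have h0 := DFunLike.congr_fun hds 0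
      have h1 := DFunLike.congr_fun hds 1
      simp [Finsupp.single_apply] at h0 h1
      omega
  have hne : ((Real.pi : ℂ) * Complex.I) ^ n ≠ 0 :=
    pow_ne_zero _ (mul_ne_zero (Complex.ofReal_ne_zero.mpr Real.pi_ne_zero) Complex.I_ne_zero)
  refine ⟨c' * ((Real.pi : ℂ) * Complex.I) ^ n, ?_⟩
  intro z hz
  rw [hconst z hz, hPX, mul_div_assoc, div_self hne, mul_one]
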